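/- Fix t ∈ [0,T] and suppose that Λ(t,·,·,·): ℝ^ℓ×ℝ^ℓ×P₂(ℝ^ℓ) → ℝ^m and V(t,·,·): ℝ^ℓ×P₂(ℝ^ℓ) → ℝ^ℓ are Lipschitz continuous (Euclidean distance in the vector arguments and the 2-Wasserstein distance W₂ in the measure argument). Then there is a constant C > 0 such that W₂(Ψ(t,ξ), Ψ(t,ξ')) ≤ C·W₂(ξ, ξ') for all ξ, ξ' ∈ P₂(ℝ^ℓ), i.e. the map μ ↦ Ψ(t,μ) = μ ∘ Λ(t,·,V(t,·,μ),μ)^{-1} is Lipschitz with respect to W₂. -/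

import Mathlib

open MeasureTheory ProbabilityTheory Filter Set Matrix
open scoped ENNReal NNReal InnerProductSpace BigOperators Topology

noncomputable section

namespace MFLDP

/-- Euclidean state space `ℝ^n`. -/
abbrev Vec (n : ℕ) := EuclideanSpace ℝ (Fin n)

/-- Matrix-vector multiplication on Euclidean spaces. -/
def matVec {a b : ℕ} (M : Matrix (Fin a) (Fin b) ℝ) (v : Vec b) : Vec a :=
  (EuclideanSpace.equiv (Fin a) ℝ).symm (M.mulVec (EuclideanSpace.equiv (Fin b) ℝ v))

/-- The (real) second moment `∫ ‖v‖² dμ` of a measure. -/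
def mom2 {E : Type*} [MeasurableSpace E] [NormedAddCommGroup E] (μ : Measure E) : ℝ :=
  ∫ v, ‖v‖ ^ 2 ∂μ

/-- Membership in `P₂(E)`: probability measures with finite second moment. -/
def memP2 {E : Type*} [MeasurableSpace E] [NormedAddCommGroup E] (μ : Measure E) : Prop :=
  IsProbabilityMeasure μ ∧ (∫⁻ v, (‖v‖₊ : ℝ≥0∞) ^ 2 ∂μ) < ⊤

/-- `π` is a coupling of the measures `μ` and `ν`. -/
def IsCoupling {E F : Type*} [MeasurableSpace E] [MeasurableSpace F]
    (π : Measure (E × F)) (μ : Measure E) (ν : Measure F) : Prop :=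
  π.map Prod.fst = μ ∧ π.map Prod.snd = ν

/-- The second order Wasserstein distance, defined through couplings. -/
def W2 {E : Type*} [MeasurableSpace E] [PseudoMetricSpace E] (μ ν : Measure E) : ℝ :=
  Real.sqrt (sInf { r : ℝ | ∃ π : Measure (E × E),
    IsCoupling π μ ν ∧ r = ∫ p, dist p.1 p.2 ^ 2 ∂π })

/-- Empirical measure `L^N(z) = N⁻¹ ∑ δ_{z_i}` of a tuple `z`. -/
def emp {E : Type*} [MeasurableSpace E] {N : ℕ} (z : Fin N → E) : Measure E :=
  ((N : ℝ≥0∞)⁻¹) • ∑ i, Measure.dirac (z i)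

lemma emp_isProbability {E : Type*} [MeasurableSpace E] {N : ℕ} (z : Fin (N + 1) → E) :
    IsProbabilityMeasure (emp z) := by
  constructor
  simp only [emp, Measure.smul_apply, Measure.coe_finset_sum, Finset.sum_apply,
    measure_univ, smul_eq_mul]
  rw [Finset.sum_const, Finset.card_univ, Fintype.card_fin, nsmul_eq_mul, mul_one]
  exact ENNReal.inv_mul_cancel (by exact_mod_cast Nat.succ_ne_zero N) (by simp)

/-- Empirical probability measure; for `N = 0` it is a Dirac mass at a default point. -/
def empProb {E : Type*} [MeasurableSpace E] (e₀ : E) :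
    ∀ {N : ℕ}, (Fin N → E) → ProbabilityMeasure E
  | 0, _ => ⟨Measure.dirac e₀, by infer_instance⟩
  | (_ + 1), z => ⟨emp z, emp_isProbability z⟩

/-- A `d`-dimensional Brownian motion (with respect to a given measure `P`). -/
structure IsBrownianMotion {Ω : Type*} [MeasurableSpace Ω] (P : Measure Ω) {d : ℕ}
    (W : ℝ → Ω → Vec d) : Prop where
  init : ∀ᵐ ω ∂P, W 0 ω = 0
  cont : ∀ ω, Continuous fun t => W t ω
  meas : ∀ t, Measurable (W t)
  incr_law : ∀ s t : ℝ, 0 ≤ s → s ≤ t →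
    P.map (fun ω => W t ω - W s ω)
      = (Measure.pi fun _ : Fin d => gaussianReal 0 (Real.toNNReal (t - s))).map
          (MeasurableEquiv.toLp 2 (Fin d → ℝ))
  indep_incr : ∀ (n : ℕ) (τ : Fin (n + 1) → ℝ), Monotone τ → (∀ i, 0 ≤ τ i) →
    iIndepFun (β := fun _ : Fin n => Vec d)
      (fun i ω => W (τ i.succ) ω - W (τ i.castSucc) ω) P

section LDP

variable {E : Type*} [MeasurableSpace E] [TopologicalSpace E] [OpensMeasurableSpace E]

/-- A good rate function: lower semicontinuous with (weakly) compact sublevel sets. -/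
def GoodRateFn (I : ProbabilityMeasure E → ℝ≥0∞) : Prop :=
  LowerSemicontinuous I ∧ ∀ a : ℝ≥0, IsCompact { μ : ProbabilityMeasure E | I μ ≤ a }

/-- The Laplace principle formulation of the large deviation principle for a sequence of random
probability measures `μN`, with rate function `I`. -/
def SatisfiesLDP {Ω : Type*} [MeasurableSpace Ω] (P : Measure Ω)
    (μN : (N : ℕ) → Ω → ProbabilityMeasure E) (I : ProbabilityMeasure E → ℝ≥0∞) : Prop :=
  GoodRateFn I ∧
    ∀ F : BoundedContinuousFunction (ProbabilityMeasure E) ℝ,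
      Tendsto
        (fun N : ℕ =>
          ((- (1 / (N : ℝ)) * Real.log (∫ ω, Real.exp (-(N : ℝ) * F (μN N ω)) ∂P) : ℝ) : EReal))
        atTop
        (𝓝 (⨅ μ : ProbabilityMeasure E, ((F μ : EReal) - ((I μ : ℝ≥0∞) : EReal))))

end LDP

section Path

variable {T : ℝ} {n : ℕ}

instance pathMeasurableSpace : MeasurableSpace C(Set.Icc (0:ℝ) T, Vec n) := borel _

instance pathBorelSpace : BorelSpace C(Set.Icc (0:ℝ) T, Vec n) := ⟨rfl⟩

/-- The path of a (surely) continuous process. -/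
def pathOf {Ω : Type*} (X : ℝ → Ω → Vec n) (h : ∀ ω, Continuous fun t => X t ω) (ω : Ω) :
    C(Set.Icc (0:ℝ) T, Vec n) :=
  ⟨fun s => X s ω, (h ω).comp continuous_subtype_val⟩

/-- Time-`t` marginal of a path-space measure. -/
def marginal (θ : Measure C(Set.Icc (0:ℝ) T, Vec n)) (t : Set.Icc (0:ℝ) T) : Measure (Vec n) :=
  θ.map fun γ => γ t

end Path

/-- The rate function `I(θ)` of the controlled McKean–Vlasov system with drift `D`:
`I(θ) = inf { E[½∫₀ᵀ |u_t|²dt] : u ∈ 𝒰, law(X^u) = θ }` where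
`dX^u = (D(t,X^u,law(X^u)) + σ u_t) dt + σ dW_t`, `X^u_0 = x₀`  (with `inf ∅ = ∞`). -/
def rateI (ℓ d : ℕ) (T : ℝ) (x₀ : Vec ℓ) (σ : Matrix (Fin ℓ) (Fin d) ℝ)
    (D : ℝ → Vec ℓ → Measure (Vec ℓ) → Vec ℓ)
    (θ : ProbabilityMeasure C(Set.Icc (0:ℝ) T, Vec ℓ)) : ℝ≥0∞ :=
  sInf { r : ℝ≥0∞ | ∃ (Ω' : Type) (m' : MeasurableSpace Ω') (P' : Measure Ω')
    (_hP' : IsProbabilityMeasure P') (ℱ' : Filtration ℝ m') (W' : ℝ → Ω' → Vec d)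
    (u : ℝ → Ω' → Vec d) (X : ℝ → Ω' → Vec ℓ) (hX : ∀ ω, Continuous fun t => X t ω),
    IsBrownianMotion P' W' ∧ Adapted ℱ' W' ∧ ProgMeasurable ℱ' u ∧
    (∫⁻ ω, ENNReal.ofReal (∫ t in (0:ℝ)..T, ‖u t ω‖ ^ 2) ∂P') < ⊤ ∧
    (∀ᵐ ω ∂P', ∀ t ∈ Set.Icc (0:ℝ) T,
      X t ω = x₀ + (∫ s in (0:ℝ)..t, (D s (X s ω) (P'.map (X s)) + matVec σ (u s ω)))
        + matVec σ (W' t ω)) ∧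
    P'.map (pathOf X hX) = (θ : Measure C(Set.Icc (0:ℝ) T, Vec ℓ)) ∧
    r = ∫⁻ ω, ENNReal.ofReal (∫ t in (0:ℝ)..T, ‖u t ω‖ ^ 2 / 2) ∂P' }

end MFLDP

namespace MFLDP

/-- Empirical measure of the paths of an `N`-tuple of (surely continuous) processes,
as a random probability measure on path space. -/
def empPaths {n : ℕ} {Ω : Type*} (T : ℝ) {N : ℕ} (X : Fin N → ℝ → Ω → Vec n)
    (h : ∀ i ω, Continuous fun t => X i t ω) (ω : Ω) :
    ProbabilityMeasure C(Set.Icc (0:ℝ) T, Vec n) :=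
  empProb (ContinuousMap.const _ (0 : Vec n)) fun i => pathOf (X i) (h i) ω

end MFLDP

namespace MFLDP

variable {ℓ m : ℕ}

/-- `ξ = law(χ, V(t,χ,μ))` for `χ ~ μ`. -/
def xiOf (V : ℝ → Vec ℓ → Measure (Vec ℓ) → Vec ℓ) (t : ℝ) (μ : Measure (Vec ℓ)) :
    Measure (Vec ℓ × Vec ℓ) :=
  μ.map fun z => (z, V t z μ)

/-- `∑_{j,k} Q_{jk} ∂²_{x_j x_k} φ(x)`, the trace term `tr(∂ₓₓφ Q)` (coordinatewise). -/
def hessTrace {n ℓ' : ℕ} (Q : Matrix (Fin n) (Fin n) ℝ) (φ : Vec n → Vec ℓ') (x : Vec n) :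
    Vec ℓ' :=
  ∑ j, ∑ k, Q j k •
    fderiv ℝ (fun x' => fderiv ℝ φ x' (EuclideanSpace.single k 1)) x (EuclideanSpace.single j 1)

/-- `∑_{j,k} Q_{jk} ∂_{y_k} M(y)_{i j}`: the mixed trace `tr(∂_y ∂_μ V (y) Q)`. -/
def mixTrace {ℓ' : ℕ} (Q : Matrix (Fin ℓ') (Fin ℓ') ℝ)
    (M : Vec ℓ' → Matrix (Fin ℓ') (Fin ℓ') ℝ) (y : Vec ℓ') : Vec ℓ' :=
  (EuclideanSpace.equiv (Fin ℓ') ℝ).symm fun i =>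
    ∑ j, ∑ k, Q j k * fderiv ℝ (fun y' => M y' i j) y (EuclideanSpace.single k 1)

end MFLDP

namespace MFLDP

variable {Ω : Type*} [MeasurableSpace Ω]

/-- The `S^∞`-norm of a real-valued process: essential supremum over `ω` of
`sup_{t ∈ [0,T]} |·|`. -/
def SInfty (P : Measure Ω) (T : ℝ) (g : ℝ → Ω → ℝ) : ℝ≥0∞ :=
  essSup (fun ω => ⨆ t : Set.Icc (0:ℝ) T, ENNReal.ofReal |g (t : ℝ) ω|) P

end MFLDP
namespace MFLDP

lemma integrable_norm_sq_of_memP2 {n : ℕ} {μ : Measure (Vec n)}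
    (hμ : memP2 μ) : Integrable (fun x => ‖x‖ ^ 2) μ := by
  refine ⟨(continuous_norm.pow 2).aestronglyMeasurable, ?_⟩
  have h : ∀ x : Vec n, (‖(‖x‖ ^ 2)‖₊ : ℝ≥0∞) = (‖x‖₊ : ℝ≥0∞) ^ 2 := by
    intro x
    rw [← ENNReal.coe_pow]
    congr 1
    rw [pow_two, pow_two, nnnorm_mul, nnnorm_norm]
  simpa [HasFiniteIntegral, h, enorm_eq_nnnorm] using hμ.2

lemma W2_self_eq_zero {n : ℕ} {μ : Measure (Vec n)} (hμ : IsProbabilityMeasure μ) :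
    W2 μ μ = 0 := by
  set S := { r : ℝ | ∃ π : Measure (Vec n × Vec n),
    IsCoupling π μ μ ∧ r = ∫ p, dist p.1 p.2 ^ 2 ∂π } with hS
  have hm : Measurable fun x : Vec n => (x, x) := measurable_id.prodMk measurable_id
  have hmem : (0:ℝ) ∈ S := by
    refine ⟨μ.map (fun x => (x, x)), ⟨?_, ?_⟩, ?_⟩
    · rw [Measure.map_map measurable_fst hm]
      exact Measure.map_id
    · rw [Measure.map_map measurable_snd hm]
      exact Measure.map_id
    · rw [integral_map hm.aemeasurable (f := fun p : Vec n × Vec n => dist p.1 p.2 ^ 2)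
        ((continuous_fst.dist continuous_snd).pow 2).aestronglyMeasurable]
      simp
  have hlb : ∀ r ∈ S, (0:ℝ) ≤ r := by
    rintro r ⟨π, -, rfl⟩
    exact integral_nonneg fun p => by positivity
  have : sInf S = 0 := le_antisymm (csInf_le ⟨0, hlb⟩ hmem) (le_csInf ⟨0, hmem⟩ hlb)
  rw [W2, ← hS, this, Real.sqrt_zero]

set_option maxHeartbeats 1000000 in
/-- estimate (3.4) of the paper: if `Λ(t,·,·,·)` and `V(t,·,·)` are Lipschitz
continuous (Euclidean distance in the vector arguments, `W₂` in the measure argument), then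
`μ ↦ Ψ(t,μ) = μ ∘ Λ(t,·,V(t,·,μ),μ)⁻¹` is Lipschitz with respect to `W₂`:
`W₂(Ψ(t,ξ), Ψ(t,ξ')) ≤ C W₂(ξ, ξ')` on `P₂(ℝ^ℓ)`. -/
theorem Psi_W2_lipschitz {ℓ m : ℕ} (T t : ℝ) (ht : t ∈ Set.Icc (0:ℝ) T)
    (Λ : ℝ → Vec ℓ → Vec ℓ → MeasureTheory.Measure (Vec ℓ) → Vec m)
    (V : ℝ → Vec ℓ → MeasureTheory.Measure (Vec ℓ) → Vec ℓ)
    (LΛ LV : ℝ)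
    (hΛ : ∀ (x x' y y' : Vec ℓ) (μ μ' : MeasureTheory.Measure (Vec ℓ)),
      memP2 μ → memP2 μ' →
      ‖Λ t x y μ - Λ t x' y' μ'‖ ≤ LΛ * (‖x - x'‖ + ‖y - y'‖ + W2 μ μ'))
    (hV : ∀ (x x' : Vec ℓ) (μ μ' : MeasureTheory.Measure (Vec ℓ)),
      memP2 μ → memP2 μ' →
      ‖V t x μ - V t x' μ'‖ ≤ LV * (‖x - x'‖ + W2 μ μ')) :
    ∃ C > (0:ℝ), ∀ ξ ξ' : MeasureTheory.Measure (Vec ℓ), memP2 ξ → memP2 ξ' →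
      W2 (ξ.map fun x => Λ t x (V t x ξ) ξ) (ξ'.map fun x => Λ t x (V t x ξ') ξ')
        ≤ C * W2 ξ ξ' := by
  classical
  set L : ℝ := |LΛ| * (1 + |LV|) with hLdef
  have hL0 : 0 ≤ L := mul_nonneg (abs_nonneg _) (by positivity)
  refine ⟨2 * L + 1, by positivity, ?_⟩
  intro ξ ξ' hξ hξ'
  haveI : IsProbabilityMeasure ξ := hξ.1
  haveI : IsProbabilityMeasure ξ' := hξ'.1
  set f : Vec ℓ → Vec m := fun x => Λ t x (V t x ξ) ξ with hfdef
  set f' : Vec ℓ → Vec m := fun x => Λ t x (V t x ξ') ξ' with hf'def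
  set W : ℝ := W2 ξ ξ' with hWdef
  have hW0 : 0 ≤ W := Real.sqrt_nonneg _
  -- pointwise Lipschitz-type bound between f and f'
  have key : ∀ x x' : Vec ℓ, ‖f x - f' x'‖ ≤ L * (‖x - x'‖ + W) := by
    intro x x'
    have h1 := hΛ x x' (V t x ξ) (V t x' ξ') ξ ξ' hξ hξ'
    have h2 := hV x x' ξ ξ' hξ hξ'
    rw [← hWdef] at h1 h2
    have hb0 : (0:ℝ) ≤ ‖V t x ξ - V t x' ξ'‖ := norm_nonneg _
    have ha0 : (0:ℝ) ≤ ‖x - x'‖ := norm_nonneg _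
    have hb : ‖V t x ξ - V t x' ξ'‖ ≤ |LV| * (‖x - x'‖ + W) :=
      h2.trans (mul_le_mul_of_nonneg_right (le_abs_self LV) (by linarith))
    have h3 : ‖f x - f' x'‖ ≤ |LΛ| * (‖x - x'‖ + ‖V t x ξ - V t x' ξ'‖ + W) :=
      h1.trans (mul_le_mul_of_nonneg_right (le_abs_self LΛ) (by linarith))
    have h4 : |LΛ| * (‖x - x'‖ + ‖V t x ξ - V t x' ξ'‖ + W)
        ≤ |LΛ| * (‖x - x'‖ + (|LV| * (‖x - x'‖ + W)) + W) :=
      mul_le_mul_of_nonneg_left (by linarith) (abs_nonneg _)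
    have h5 : |LΛ| * (‖x - x'‖ + (|LV| * (‖x - x'‖ + W)) + W) = L * (‖x - x'‖ + W) := by
      rw [hLdef]; ring
    linarith
  -- f and f' are Lipschitz (hence measurable)
  have hself : W2 ξ ξ = 0 := W2_self_eq_zero hξ.1
  have hself' : W2 ξ' ξ' = 0 := W2_self_eq_zero hξ'.1
  have keyf : ∀ (μ : Measure (Vec ℓ)), memP2 μ → W2 μ μ = 0 →
      ∀ x x' : Vec ℓ, ‖Λ t x (V t x μ) μ - Λ t x' (V t x' μ) μ‖ ≤ L * ‖x - x'‖ := by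
    intro μ hμ hμ0 x x'
    have h1 := hΛ x x' (V t x μ) (V t x' μ) μ μ hμ hμ
    have h2 := hV x x' μ μ hμ hμ
    rw [hμ0] at h1 h2
    have hb0 : (0:ℝ) ≤ ‖V t x μ - V t x' μ‖ := norm_nonneg _
    have ha0 : (0:ℝ) ≤ ‖x - x'‖ := norm_nonneg _
    have hb : ‖V t x μ - V t x' μ‖ ≤ |LV| * ‖x - x'‖ := by
      have := h2.trans (mul_le_mul_of_nonneg_right (le_abs_self LV) (by linarith))
      linarith [this]
    have h3 : ‖Λ t x (V t x μ) μ - Λ t x' (V t x' μ) μ‖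
        ≤ |LΛ| * (‖x - x'‖ + ‖V t x μ - V t x' μ‖ + 0) :=
      h1.trans (mul_le_mul_of_nonneg_right (le_abs_self LΛ) (by linarith))
    have h4 : |LΛ| * (‖x - x'‖ + ‖V t x μ - V t x' μ‖ + 0)
        ≤ |LΛ| * (‖x - x'‖ + |LV| * ‖x - x'‖ + 0) :=
      mul_le_mul_of_nonneg_left (by linarith) (abs_nonneg _)
    have h5 : |LΛ| * (‖x - x'‖ + |LV| * ‖x - x'‖ + 0) = L * ‖x - x'‖ := by
      rw [hLdef]; ring
    linarith
  have hf_meas : Measurable f := by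
    have hlip : LipschitzWith (Real.toNNReal L) f := by
      apply LipschitzWith.of_dist_le_mul
      intro x y
      rw [dist_eq_norm, dist_eq_norm, Real.coe_toNNReal _ hL0]
      exact keyf ξ hξ hself x y
    exact hlip.continuous.measurable
  have hf'_meas : Measurable f' := by
    have hlip : LipschitzWith (Real.toNNReal L) f' := by
      apply LipschitzWith.of_dist_le_mul
      intro x y
      rw [dist_eq_norm, dist_eq_norm, Real.coe_toNNReal _ hL0]
      exact keyf ξ' hξ' hself' x y
    exact hlip.continuous.measurable
  -- the two optimal-transport sets
  set S : Set ℝ := { r : ℝ | ∃ π : Measure (Vec ℓ × Vec ℓ),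
    IsCoupling π ξ ξ' ∧ r = ∫ p, dist p.1 p.2 ^ 2 ∂π } with hSdef
  set S' : Set ℝ := { r : ℝ | ∃ π : Measure (Vec m × Vec m),
    IsCoupling π (ξ.map f) (ξ'.map f') ∧ r = ∫ p, dist p.1 p.2 ^ 2 ∂π } with hS'def
  have hSlb : ∀ r ∈ S, (0:ℝ) ≤ r := by
    rintro r ⟨π, -, rfl⟩
    exact integral_nonneg fun p => by positivity
  have hS'lb : ∀ r ∈ S', (0:ℝ) ≤ r := by
    rintro r ⟨π, -, rfl⟩
    exact integral_nonneg fun p => by positivity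
  have hSne : S.Nonempty := by
    refine ⟨_, ξ.prod ξ', ⟨?_, ?_⟩, rfl⟩
    · rw [Measure.map_fst_prod]; simp
    · rw [Measure.map_snd_prod]; simp
  have hSInf0 : (0:ℝ) ≤ sInf S := le_csInf hSne hSlb
  have hWs : W = Real.sqrt (sInf S) := by rw [hWdef, W2, ← hSdef]
  have hWsq : W ^ 2 = sInf S := by rw [hWs, Real.sq_sqrt hSInf0]
  -- main estimate, coupling by coupling
  have hmain : ∀ r ∈ S, sInf S' ≤ 2 * L ^ 2 * r + 2 * L ^ 2 * sInf S := by
    rintro r ⟨π, hcoup, rfl⟩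
    haveI hπ : IsProbabilityMeasure π := by
      constructor
      have h := congrArg (fun ν : Measure (Vec ℓ) => ν Set.univ) hcoup.1
      simp only [Measure.map_apply measurable_fst MeasurableSet.univ, Set.preimage_univ,
        measure_univ] at h
      exact h
    have hmm : Measurable (Prod.map f f') := hf_meas.prodMap hf'_meas
    have hmem' : (∫ p, dist p.1 p.2 ^ 2 ∂(π.map (Prod.map f f'))) ∈ S' := by
      refine ⟨π.map (Prod.map f f'), ⟨?_, ?_⟩, rfl⟩
      · rw [Measure.map_map measurable_fst hmm]
        have h : (Prod.fst ∘ Prod.map f f') = f ∘ Prod.fst := rfl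
        rw [h, ← Measure.map_map hf_meas measurable_fst, hcoup.1]
      · rw [Measure.map_map measurable_snd hmm]
        have h : (Prod.snd ∘ Prod.map f f') = f' ∘ Prod.snd := rfl
        rw [h, ← Measure.map_map hf'_meas measurable_snd, hcoup.2]
    have hstep : sInf S' ≤ ∫ p, dist p.1 p.2 ^ 2 ∂(π.map (Prod.map f f')) :=
      csInf_le ⟨0, hS'lb⟩ hmem'
    have hch : (∫ p, dist p.1 p.2 ^ 2 ∂(π.map (Prod.map f f')))
        = ∫ p : Vec ℓ × Vec ℓ, dist (f p.1) (f' p.2) ^ 2 ∂π := by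
      rw [integral_map hmm.aemeasurable (f := fun p : Vec m × Vec m => dist p.1 p.2 ^ 2)
        ((continuous_fst.dist continuous_snd).pow 2).aestronglyMeasurable]
      rfl
    have hint1 : Integrable (fun p : Vec ℓ × Vec ℓ => ‖p.1‖ ^ 2) π := by
      have h0 : Integrable (fun x : Vec ℓ => ‖x‖ ^ 2) (π.map Prod.fst) := by
        rw [hcoup.1]; exact integrable_norm_sq_of_memP2 hξ
      exact h0.comp_measurable measurable_fst
    have hint2 : Integrable (fun p : Vec ℓ × Vec ℓ => ‖p.2‖ ^ 2) π := by
      have h0 : Integrable (fun x : Vec ℓ => ‖x‖ ^ 2) (π.map Prod.snd) := by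
        rw [hcoup.2]; exact integrable_norm_sq_of_memP2 hξ'
      exact h0.comp_measurable measurable_snd
    have hintd : Integrable (fun p : Vec ℓ × Vec ℓ => ‖p.1 - p.2‖ ^ 2) π := by
      refine ((hint1.const_mul 2).add (hint2.const_mul 2)).mono'
        ((continuous_fst.sub continuous_snd).norm.pow 2).aestronglyMeasurable ?_
      filter_upwards with p
      have h := norm_sub_le p.1 p.2
      simp only [Pi.add_apply]
      rw [Real.norm_eq_abs, abs_of_nonneg (by positivity)]
      nlinarith [norm_nonneg p.1, norm_nonneg p.2, sq_nonneg (‖p.1‖ - ‖p.2‖),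
        mul_self_le_mul_self (norm_nonneg (p.1 - p.2)) h]
    have hG : Integrable
        (fun p : Vec ℓ × Vec ℓ => 2 * L ^ 2 * ‖p.1 - p.2‖ ^ 2 + 2 * L ^ 2 * W ^ 2) π :=
      (hintd.const_mul _).add (integrable_const _)
    have hmono : (∫ p : Vec ℓ × Vec ℓ, dist (f p.1) (f' p.2) ^ 2 ∂π)
        ≤ ∫ p : Vec ℓ × Vec ℓ, (2 * L ^ 2 * ‖p.1 - p.2‖ ^ 2 + 2 * L ^ 2 * W ^ 2) ∂π := by
      refine integral_mono_of_nonneg ?_ hG ?_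
      · filter_upwards with p; positivity
      · filter_upwards with p
        have h := key p.1 p.2
        rw [dist_eq_norm]
        nlinarith [norm_nonneg (f p.1 - f' p.2), norm_nonneg (p.1 - p.2), hW0, hL0,
          sq_nonneg (‖p.1 - p.2‖ - W), mul_self_le_mul_self (norm_nonneg (f p.1 - f' p.2)) h,
          sq_nonneg L]
    have hsplit : (∫ p : Vec ℓ × Vec ℓ, (2 * L ^ 2 * ‖p.1 - p.2‖ ^ 2 + 2 * L ^ 2 * W ^ 2) ∂π)
        = 2 * L ^ 2 * (∫ p : Vec ℓ × Vec ℓ, ‖p.1 - p.2‖ ^ 2 ∂π) + 2 * L ^ 2 * W ^ 2 := by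
      rw [integral_add (hintd.const_mul _) (integrable_const _), integral_const_mul,
        integral_const]
      simp
    have hrW : (∫ p : Vec ℓ × Vec ℓ, dist p.1 p.2 ^ 2 ∂π)
        = ∫ p : Vec ℓ × Vec ℓ, ‖p.1 - p.2‖ ^ 2 ∂π := by
      simp only [dist_eq_norm]
    calc sInf S' ≤ ∫ p, dist p.1 p.2 ^ 2 ∂(π.map (Prod.map f f')) := hstep
      _ = ∫ p : Vec ℓ × Vec ℓ, dist (f p.1) (f' p.2) ^ 2 ∂π := hch
      _ ≤ ∫ p : Vec ℓ × Vec ℓ, (2 * L ^ 2 * ‖p.1 - p.2‖ ^ 2 + 2 * L ^ 2 * W ^ 2) ∂π := hmono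
      _ = 2 * L ^ 2 * (∫ p : Vec ℓ × Vec ℓ, ‖p.1 - p.2‖ ^ 2 ∂π) + 2 * L ^ 2 * W ^ 2 := hsplit
      _ = 2 * L ^ 2 * (∫ p : Vec ℓ × Vec ℓ, dist p.1 p.2 ^ 2 ∂π) + 2 * L ^ 2 * sInf S := by
          rw [← hrW, hWsq]
  -- pass to the infimum
  have h8 : sInf S' ≤ 4 * L ^ 2 * sInf S := by
    by_contra hcon
    push_neg at hcon
    have h4 : ∀ ε > (0:ℝ), sInf S' ≤ 4 * L ^ 2 * sInf S + ε := by
      intro ε hε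
      set δ := ε / (2 * L ^ 2 + 1) with hδdef
      have hδ : 0 < δ := div_pos hε (by positivity)
      obtain ⟨r, hrS, hr⟩ := Real.lt_sInf_add_pos hSne hδ
      have h5 := hmain r hrS
      have h6 : 2 * L ^ 2 * r ≤ 2 * L ^ 2 * (sInf S + δ) :=
        mul_le_mul_of_nonneg_left hr.le (by positivity)
      have h7 : (2 * L ^ 2 + 1) * δ = ε := by
        rw [hδdef]; field_simp
      nlinarith [hδ.le, sq_nonneg L]
    have := h4 ((sInf S' - 4 * L ^ 2 * sInf S) / 2) (by linarith)
    linarith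
  calc W2 (ξ.map f) (ξ'.map f') = Real.sqrt (sInf S') := by rw [W2, ← hS'def]
    _ ≤ Real.sqrt (4 * L ^ 2 * sInf S) := Real.sqrt_le_sqrt h8
    _ = 2 * L * Real.sqrt (sInf S) := by
        rw [show (4:ℝ) * L ^ 2 * sInf S = (2 * L) ^ 2 * sInf S by ring,
          Real.sqrt_mul (sq_nonneg _), Real.sqrt_sq (by positivity)]
    _ ≤ (2 * L + 1) * W := by
        rw [hWs]
        nlinarith [Real.sqrt_nonneg (sInf S)]


end MFLDP
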